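/- Let f : ℝ^d → ℝ be real-analytic on all of ℝ^d and not identically zero. Then its zero set Z(f) := { x ∈ ℝ^d : f(x) = 0 } is the union of countably many compact sets each of which has finite (d−1)-dimensional Hausdorff measure; in particular the Hausdorff dimension of Z(f) does not exceed d − 1. -/

import Mathlib

open MeasureTheory ENNReal

noncomputable section ZeroSetAux
open Set Filter Topology

variable {d : ℕ}

/-- basis vector -/
noncomputable def zsBV (d : ℕ) (j : Fin d) : EuclideanSpace ℝ (Fin d) :=
  EuclideanSpace.single j 1

/-- directional derivative along basis vector -/
noncomputable def zsDD (j : Fin d) (g : EuclideanSpace ℝ (Fin d) → ℝ) :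
    EuclideanSpace ℝ (Fin d) → ℝ :=
  fun y => fderiv ℝ g y (zsBV d j)

/-- nested directional derivatives -/
noncomputable def zsGG : List (Fin d) → (EuclideanSpace ℝ (Fin d) → ℝ) →
    (EuclideanSpace ℝ (Fin d) → ℝ)
  | [], g => g
  | j :: L, g => zsGG L (zsDD j g)

lemma zsDD_analytic {g : EuclideanSpace ℝ (Fin d) → ℝ}
    (hg : AnalyticOnNhd ℝ g Set.univ) (j : Fin d) :
    AnalyticOnNhd ℝ (zsDD j g) Set.univ := by
  intro x hx
  exact ((ContinuousLinearMap.apply ℝ ℝ (zsBV d j)).analyticAt _).comp (hg.fderiv x hx)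

lemma zsGG_analytic {g : EuclideanSpace ℝ (Fin d) → ℝ}
    (hg : AnalyticOnNhd ℝ g Set.univ) (L : List (Fin d)) :
    AnalyticOnNhd ℝ (zsGG L g) Set.univ := by
  induction L generalizing g with
  | nil => exact hg
  | cons j L ih => exact ih (zsDD_analytic hg j)

lemma zsGG_append {g : EuclideanSpace ℝ (Fin d) → ℝ} (L : List (Fin d)) (j : Fin d) :
    zsGG (L ++ [j]) g = zsDD j (zsGG L g) := by
  induction L generalizing g with
  | nil => rfl
  | cons i L ih => simpa [zsGG] using ih (g := zsDD i g)

/-- the basis of EuclideanSpace -/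
noncomputable def zsB (d : ℕ) : Module.Basis (Fin d) ℝ (EuclideanSpace ℝ (Fin d)) :=
  (EuclideanSpace.basisFun (Fin d) ℝ).toBasis

lemma zsB_apply (j : Fin d) : zsB d j = zsBV d j := by
  simp [zsB, zsBV, OrthonormalBasis.coe_toBasis, EuclideanSpace.basisFun_apply]

lemma zs_vanish_iterated {g : EuclideanSpace ℝ (Fin d) → ℝ} {x : EuclideanSpace ℝ (Fin d)}
    (hg : AnalyticOnNhd ℝ g Set.univ) (h : ∀ L : List (Fin d), zsGG L g x = 0) (n : ℕ) :
    iteratedFDeriv ℝ n g x = 0 := by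
  induction n generalizing g with
  | zero =>
    ext m
    simpa [iteratedFDeriv_zero_apply, zsGG] using h []
  | succ n ih =>
    have key : ∀ v : Fin (n + 1) → Fin d,
        iteratedFDeriv ℝ (n + 1) g x (fun k => zsB d (v k)) = 0 := by
      intro v
      rw [iteratedFDeriv_succ_apply_right]
      set j := v (Fin.last n) with hj
      have hcomp : iteratedFDeriv ℝ n (zsDD j g) x =
          (ContinuousLinearMap.apply ℝ ℝ (zsBV d j)).compContinuousMultilinearMap
            (iteratedFDeriv ℝ n (fderiv ℝ g) x) := by
        exact (ContinuousLinearMap.apply ℝ ℝ (zsBV d j)).iteratedFDeriv_comp_left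
          (n := ⊤) (hg.fderiv.contDiff.contDiffAt (x := x)) le_top
      have h0 : iteratedFDeriv ℝ n (zsDD j g) x = 0 := by
        refine ih (zsDD_analytic hg j) ?_
        intro L
        simpa [zsGG] using h (j :: L)
      have := congrArg (fun (M : ContinuousMultilinearMap ℝ (fun _ : Fin n => EuclideanSpace ℝ (Fin d)) ℝ)
        => M (fun k => zsB d (v (Fin.castSucc k)))) (hcomp.symm.trans h0)
      simp only [ContinuousLinearMap.compContinuousMultilinearMap_coe, Function.comp_apply,
        ContinuousLinearMap.apply_apply, ContinuousMultilinearMap.zero_apply] at this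
      rw [show (Fin.init fun k => zsB d (v k)) = fun k => zsB d (v (Fin.castSucc k)) from rfl,
        zsB_apply j]
      exact this
    have : (iteratedFDeriv ℝ (n + 1) g x).toMultilinearMap =
        (0 : ContinuousMultilinearMap ℝ (fun _ : Fin (n+1) => EuclideanSpace ℝ (Fin d)) ℝ).toMultilinearMap := by
      apply Module.Basis.ext_multilinear (fun _ => zsB d)
      intro v
      simpa using key v
    exact ContinuousMultilinearMap.toMultilinearMap_injective this

lemma zs_all_zero {f : EuclideanSpace ℝ (Fin d) → ℝ} {x : EuclideanSpace ℝ (Fin d)}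
    (hf : AnalyticOnNhd ℝ f Set.univ) (h : ∀ L : List (Fin d), zsGG L f x = 0) :
    f = fun _ => 0 := by
  have hiter : ∀ n, iteratedFDeriv ℝ n f x = 0 := zs_vanish_iterated hf h
  -- f vanishes in a neighborhood of x
  obtain ⟨p, r, hp⟩ := hf x (Set.mem_univ x)
  have hev : ∀ᶠ z in 𝓝 x, f z = 0 := by
    have : ∀ y ∈ Metric.eball (0 : EuclideanSpace ℝ (Fin d)) r, f (x + y) = 0 := by
      intro y hy
      have hs := hp.hasSum_iteratedFDeriv hy
      have : HasSum (fun n : ℕ => (0 : ℝ)) (f (x + y)) := by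
        convert! hs with n
        simp [hiter n]
      simpa using this.unique hasSum_zero
    have hball : Metric.eball x r ∈ 𝓝 x := Metric.eball_mem_nhds x hp.r_pos
    filter_upwards [hball] with z hz
    have hz' : z - x ∈ Metric.eball (0 : EuclideanSpace ℝ (Fin d)) r := by
      rw [Metric.mem_eball] at hz ⊢
      simpa [edist_nndist, nndist_eq_nnnorm] using hz
    have := this (z - x) hz'
    simpa using this
  have := hf.eqOn_zero_of_preconnected_of_eventuallyEq_zero isPreconnected_univ
    (Set.mem_univ x) hev
  funext y
  exact this (Set.mem_univ y)

end ZeroSetAux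

noncomputable section ZeroSetAux2
open Set Filter Topology
variable {d : ℕ}

lemma zs_exists_good {f : EuclideanSpace ℝ (Fin d) → ℝ}
    (hf : AnalyticOnNhd ℝ f Set.univ) (hf0 : f ≠ fun _ => 0)
    {x : EuclideanSpace ℝ (Fin d)} (hx : f x = 0) :
    ∃ L : List (Fin d), ∃ j : Fin d,
      zsGG L f x = 0 ∧ fderiv ℝ (zsGG L f) x (zsBV d j) ≠ 0 := by
  have hne : ¬ ∀ L : List (Fin d), zsGG L f x = 0 := fun h => hf0 (zs_all_zero hf h)
  push_neg at hne
  have hP : ∃ n, ∃ L : List (Fin d), L.length = n ∧ zsGG L f x ≠ 0 := by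
    obtain ⟨L, hL⟩ := hne
    exact ⟨L.length, L, rfl, hL⟩
  classical
  set n₀ := Nat.find hP with hn₀
  obtain ⟨L, hLlen, hLne⟩ := Nat.find_spec hP
  have hL0 : L ≠ [] := by
    rintro rfl
    exact hLne (by simpa [zsGG] using hx)
  obtain ⟨L', j, rfl⟩ := (List.eq_nil_or_concat L).resolve_left hL0
  refine ⟨L', j, ?_, ?_⟩
  · by_contra h
    have : ∃ L'' : List (Fin d), L''.length = L'.length ∧ zsGG L'' f x ≠ 0 := ⟨L', rfl, h⟩
    have hlt : L'.length < n₀ := by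
      rw [hn₀, ← hLlen, List.concat_eq_append]; simp
    exact Nat.find_min hP hlt this
  · rw [List.concat_eq_append, zsGG_append] at hLne
    exact hLne

lemma zs_hyperplane (hd : 0 < d) (j : Fin d) {S : Set (EuclideanSpace ℝ (Fin d))}
    (hS : IsCompact S) (hSP : ∀ w ∈ S, w j = 0) :
    μH[(d : ℝ) - 1] S < ∞ := by
  set P : Submodule ℝ (EuclideanSpace ℝ (Fin d)) := LinearMap.ker (EuclideanSpace.projₗ (𝕜 := ℝ) j)
  have hrange : LinearMap.range (EuclideanSpace.projₗ (𝕜 := ℝ) j) = ⊤ := by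
    rw [LinearMap.range_eq_top]
    intro c
    refine ⟨EuclideanSpace.single j c, ?_⟩
    simp [EuclideanSpace.projₗ]
  have hfinrank : Module.finrank ℝ P = d - 1 := by
    have h1 := LinearMap.finrank_range_add_finrank_ker (EuclideanSpace.projₗ (𝕜 := ℝ) j)
    rw [hrange] at h1
    rw [finrank_top, finrank_euclideanSpace_fin, Module.finrank_self,
      show LinearMap.ker (EuclideanSpace.projₗ (𝕜 := ℝ) j) = P from rfl] at h1
    omega
  have hPclosed : IsClosed (P : Set (EuclideanSpace ℝ (Fin d))) :=
    Submodule.closed_of_finiteDimensional P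
  -- preimage in the subtype
  set S' : Set P := Subtype.val ⁻¹' S
  have hS' : IsCompact S' := by
    have hemb : Topology.IsClosedEmbedding (Subtype.val : P → EuclideanSpace ℝ (Fin d)) :=
      hPclosed.isClosedEmbedding_subtypeVal
    exact hemb.isCompact_preimage hS
  have hmeas : μH[(d : ℝ) - 1] S' < ∞ := by
    have hcast : ((d : ℝ) - 1) = ((Module.finrank ℝ P : ℝ)) := by
      rw [hfinrank]
      have : (1 : ℕ) ≤ d := hd
      push_cast [Nat.cast_sub this]
      ring
    rw [hcast]
    exact hS'.measure_lt_top (μ := μH[(Module.finrank ℝ P : ℝ)])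
  have himg : Subtype.val '' S' = S := by
    apply Set.eq_of_subset_of_subset
    · rintro w ⟨w', hw', rfl⟩; exact hw'
    · intro w hw
      have hwP : w ∈ P := by
        simp only [P, LinearMap.mem_ker]
        simpa [EuclideanSpace.projₗ] using hSP w hw
      exact ⟨⟨w, hwP⟩, hw, rfl⟩
  calc μH[(d : ℝ) - 1] S = μH[(d : ℝ) - 1] (Subtype.val '' S') := by rw [himg]
    _ = μH[(d : ℝ) - 1] S' := by
        refine isometry_subtype_coe.hausdorffMeasure_image (Or.inl ?_) S'
        have : (1 : ℝ) ≤ d := by exact_mod_cast hd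
        linarith
    _ < ∞ := hmeas

end ZeroSetAux2

noncomputable section ZeroSetAux3
open Set Filter Topology
variable {d : ℕ}

lemma zs_local (hd : 0 < d) {g : EuclideanSpace ℝ (Fin d) → ℝ}
    (hg : AnalyticOnNhd ℝ g Set.univ) {x : EuclideanSpace ℝ (Fin d)} {j : Fin d}
    (hj : fderiv ℝ g x (zsBV d j) ≠ 0) :
    ∃ r > 0, μH[(d : ℝ) - 1] ({y | g y = 0} ∩ Metric.closedBall x r) < ∞ := by
  classical
  set v : EuclideanSpace ℝ (Fin d) := zsBV d j with hv
  set l : EuclideanSpace ℝ (Fin d) →L[ℝ] ℝ := fderiv ℝ g x with hl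
  set c : ℝ := l v with hc
  have hc0 : c ≠ 0 := hj
  set π : EuclideanSpace ℝ (Fin d) →L[ℝ] ℝ := EuclideanSpace.proj (𝕜 := ℝ) j with hπ
  have hπv : π v = 1 := by
    simp [hπ, hv, zsBV, PiLp.proj_apply, EuclideanSpace.single_apply]
  set Φ : EuclideanSpace ℝ (Fin d) → EuclideanSpace ℝ (Fin d) :=
    fun y => y + (g y - π y) • v with hΦdef
  set A := ContinuousLinearMap.id ℝ (EuclideanSpace ℝ (Fin d)) + (l - π).smulRight v with hA
  set B := ContinuousLinearMap.id ℝ (EuclideanSpace ℝ (Fin d))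
    + (c⁻¹ • (π - l)).smulRight v with hB
  have hBA : ∀ w, B (A w) = w := by
    intro w
    simp only [hA, hB, ContinuousLinearMap.add_apply, ContinuousLinearMap.id_apply,
      ContinuousLinearMap.smulRight_apply, ContinuousLinearMap.sub_apply,
      ContinuousLinearMap.smul_apply, map_add, _root_.map_smul, smul_eq_mul, hπv, hc]
    match_scalars <;> first
      | (field_simp [show l v ≠ 0 from hc0]; ring)
      | field_simp
      | ring
  have hAB : ∀ w, A (B w) = w := by
    intro w
    simp only [hA, hB, ContinuousLinearMap.add_apply, ContinuousLinearMap.id_apply,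
      ContinuousLinearMap.smulRight_apply, ContinuousLinearMap.sub_apply,
      ContinuousLinearMap.smul_apply, map_add, _root_.map_smul, smul_eq_mul, hπv, hc]
    match_scalars <;> first
      | (field_simp [show l v ≠ 0 from hc0]; ring)
      | field_simp
      | ring
  set AE := ContinuousLinearEquiv.equivOfInverse A B hBA hAB with hAE
  have hgx : HasStrictFDerivAt g l x := (hg x (Set.mem_univ x)).hasStrictFDerivAt
  have hΦstrict : HasStrictFDerivAt Φ
      (AE : EuclideanSpace ℝ (Fin d) →L[ℝ] EuclideanSpace ℝ (Fin d)) x :=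
    (hasStrictFDerivAt_id x).add ((hgx.sub π.hasStrictFDerivAt).smul_const v)
  set ph := hΦstrict.toOpenPartialHomeomorph Φ with hph
  have hphcoe : (ph : EuclideanSpace ℝ (Fin d) → EuclideanSpace ℝ (Fin d)) = Φ :=
    hΦstrict.toOpenPartialHomeomorph_coe
  have hxsrc : x ∈ ph.source := hΦstrict.mem_toOpenPartialHomeomorph_source
  have hinv := hΦstrict.to_localInverse
  obtain ⟨K, t, htmem, hlip⟩ := hinv.exists_lipschitzOnWith
  have hgc : Continuous g := by
    exact continuousOn_univ.mp hg.continuousOn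
  have hΦc : Continuous Φ := continuous_id.add ((hgc.sub π.continuous).smul continuous_const)
  -- Φ x ∈ t, and t is a neighborhood of Φ x
  have hnhds : ph.source ∩ Φ ⁻¹' t ∈ 𝓝 x :=
    Filter.inter_mem (ph.open_source.mem_nhds hxsrc) (hΦc.continuousAt htmem)
  obtain ⟨ε, hε0, hball⟩ := Metric.mem_nhds_iff.mp hnhds
  refine ⟨ε / 2, by positivity, ?_⟩
  have hcb : Metric.closedBall x (ε / 2) ⊆ ph.source ∩ Φ ⁻¹' t :=
    (Metric.closedBall_subset_ball (by linarith)).trans hball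
  set S : Set (EuclideanSpace ℝ (Fin d)) :=
    Φ '' Metric.closedBall x (ε / 2) ∩ {w | π w = 0} with hS
  have hsymm : (ph.symm : EuclideanSpace ℝ (Fin d) → EuclideanSpace ℝ (Fin d)) =
      hΦstrict.localInverse Φ _ _ := rfl
  have hsubset : {y | g y = 0} ∩ Metric.closedBall x (ε / 2) ⊆ ph.symm '' S := by
    rintro y ⟨hy0, hycb⟩
    have hysrc : y ∈ ph.source := (hcb hycb).1
    refine ⟨Φ y, ⟨Set.mem_image_of_mem Φ hycb, ?_⟩, ?_⟩
    · show π (Φ y) = 0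
      have : π (Φ y) = π y + (g y - π y) * π v := by
        simp [hΦdef, map_add, _root_.map_smul, smul_eq_mul]
      rw [this, hπv]
      have : g y = 0 := hy0
      rw [this]; ring
    · have h1 := ph.left_inv hysrc
      rwa [hphcoe] at h1
  have hScompact : IsCompact S := by
    refine ((isCompact_closedBall x (ε / 2)).image hΦc).inter_right ?_
    have : IsClosed (π ⁻¹' {(0 : ℝ)}) := isClosed_singleton.preimage π.continuous
    simpa [Set.preimage, Set.mem_singleton_iff] using this
  have hSsub : S ⊆ t := by
    rintro w ⟨⟨y, hy, rfl⟩, -⟩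
    exact (hcb hy).2
  have hSP : ∀ w ∈ S, w j = 0 := fun w hw => hw.2
  have hs0 : (0 : ℝ) ≤ (d : ℝ) - 1 := by
    have : (1 : ℝ) ≤ d := by exact_mod_cast hd
    linarith
  calc μH[(d : ℝ) - 1] ({y | g y = 0} ∩ Metric.closedBall x (ε / 2))
      ≤ μH[(d : ℝ) - 1] (hΦstrict.localInverse Φ _ _ '' S) := by
        rw [← hsymm]; exact measure_mono hsubset
    _ ≤ (K : ℝ≥0∞) ^ ((d : ℝ) - 1) * μH[(d : ℝ) - 1] S :=
        (hlip.mono hSsub).hausdorffMeasure_image_le hs0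
    _ < ∞ := ENNReal.mul_lt_top
        (ENNReal.rpow_lt_top_of_nonneg hs0 ENNReal.coe_ne_top)
        (zs_hyperplane hd j hScompact hSP)

end ZeroSetAux3

noncomputable section ZeroSetAux4
open Set Filter Topology
variable {d : ℕ}

lemma zs_cover (hd : 0 < d) {g : EuclideanSpace ℝ (Fin d) → ℝ}
    (hg : AnalyticOnNhd ℝ g Set.univ) :
    ∃ C : ℕ → Set (EuclideanSpace ℝ (Fin d)),
      (∀ n, IsCompact (C n)) ∧ (∀ n, μH[(d : ℝ) - 1] (C n) < ∞) ∧
      {x | g x = 0 ∧ ∃ j, fderiv ℝ g x (zsBV d j) ≠ 0} ⊆ ⋃ n, C n := by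
  classical
  set T := {x | g x = 0 ∧ ∃ j, fderiv ℝ g x (zsBV d j) ≠ 0} with hT
  have hloc : ∀ x ∈ T, ∃ r > 0,
      μH[(d : ℝ) - 1] ({y | g y = 0} ∩ Metric.closedBall x r) < ∞ := by
    rintro x ⟨-, j, hj⟩
    exact zs_local hd hg hj
  choose! r hr0 hrfin using hloc
  obtain ⟨t, hts, htc, hcover⟩ :=
    TopologicalSpace.countable_cover_nhdsWithin (f := fun x => Metric.closedBall x (r x)) (s := T)
      (fun x hx => mem_nhdsWithin_of_mem_nhds
        (Metric.closedBall_mem_nhds x (hr0 x hx)))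
  rcases t.eq_empty_or_nonempty with rfl | htne
  · refine ⟨fun _ => ∅, fun _ => isCompact_empty, fun _ => by simp, ?_⟩
    intro x hx
    have := hcover hx
    simp at this
  obtain ⟨e, he⟩ := htc.exists_eq_range htne
  have hgc : Continuous g := continuousOn_univ.mp hg.continuousOn
  have hZgc : IsClosed {y | g y = 0} := isClosed_eq hgc continuous_const
  refine ⟨fun n => {y | g y = 0} ∩ Metric.closedBall (e n) (r (e n)),
    fun n => (isCompact_closedBall _ _).inter_left hZgc, fun n => ?_, ?_⟩
  · have hmem : e n ∈ T := hts (by rw [he]; exact ⟨n, rfl⟩)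
    exact hrfin (e n) hmem
  · intro x hx
    have hx' := hcover hx
    simp only [Set.mem_iUnion] at hx' ⊢
    obtain ⟨y, hyt, hy⟩ := hx'
    obtain ⟨n, rfl⟩ : ∃ n, e n = y := by
      rw [he] at hyt; exact hyt
    exact ⟨n, hx.1, hy⟩

lemma zs_main (hd : 0 < d) {f : EuclideanSpace ℝ (Fin d) → ℝ}
    (hf : AnalyticOnNhd ℝ f Set.univ) (hf0 : f ≠ fun _ => 0) :
    ∃ K : ℕ → Set (EuclideanSpace ℝ (Fin d)),
      (∀ n, IsCompact (K n)) ∧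
      (∀ n, μH[(d : ℝ) - 1] (K n) < ∞) ∧
      {x | f x = 0} = ⋃ n, K n := by
  classical
  have hfc : Continuous f := continuousOn_univ.mp hf.continuousOn
  have hZc : IsClosed {x | f x = 0} := isClosed_eq hfc continuous_const
  have hC : ∀ L : List (Fin d),
      ∃ C : ℕ → Set (EuclideanSpace ℝ (Fin d)),
        (∀ n, IsCompact (C n)) ∧ (∀ n, μH[(d : ℝ) - 1] (C n) < ∞) ∧
        {x | zsGG L f x = 0 ∧ ∃ j, fderiv ℝ (zsGG L f) x (zsBV d j) ≠ 0} ⊆ ⋃ n, C n :=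
    fun L => zs_cover hd (zsGG_analytic hf L)
  choose C hC1 hC2 hC3 using hC
  obtain ⟨e, he⟩ := exists_surjective_nat (List (Fin d) × ℕ)
  refine ⟨fun n => C (e n).1 (e n).2 ∩ {x | f x = 0}, ?_, ?_, ?_⟩
  · exact fun n => (hC1 (e n).1 (e n).2).inter_right hZc
  · exact fun n => lt_of_le_of_lt (measure_mono Set.inter_subset_left) (hC2 (e n).1 (e n).2)
  · apply Set.eq_of_subset_of_subset
    · intro x hx
      obtain ⟨L, j, hL0, hLj⟩ := zs_exists_good hf hf0 hx
      have hxT : x ∈ {x | zsGG L f x = 0 ∧ ∃ j, fderiv ℝ (zsGG L f) x (zsBV d j) ≠ 0} :=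
        ⟨hL0, j, hLj⟩
      obtain ⟨m, hm⟩ := Set.mem_iUnion.mp (hC3 L hxT)
      obtain ⟨n, hn⟩ := he (L, m)
      refine Set.mem_iUnion.mpr ⟨n, ?_⟩
      rw [hn]
      exact ⟨hm, hx⟩
    · exact Set.iUnion_subset fun n => Set.inter_subset_right

end ZeroSetAux4

/-- The zero set of a not-identically-zero real-analytic function on `ℝ^d` is a
countable union of compact sets of finite `(d−1)`-dimensional Hausdorff measure; in
particular its Hausdorff dimension does not exceed `d − 1`. -/
theorem zero_set_of_real_analytic
    (d : ℕ) (f : EuclideanSpace ℝ (Fin d) → ℝ)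
    (hf : AnalyticOnNhd ℝ f Set.univ)
    (hf0 : f ≠ fun _ => 0) :
    (∃ K : ℕ → Set (EuclideanSpace ℝ (Fin d)),
      (∀ n, IsCompact (K n)) ∧
      (∀ n, μH[(d : ℝ) - 1] (K n) < ∞) ∧
      {x | f x = 0} = ⋃ n, K n) ∧
    dimH {x | f x = 0} ≤ (d : ℝ≥0∞) - 1 := by
  rcases Nat.eq_zero_or_pos d with rfl | hd
  · -- d = 0 : the space is a single point and the zero set is empty
    haveI : Subsingleton (EuclideanSpace ℝ (Fin 0)) := by
      unfold EuclideanSpace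
      infer_instance
    have hZ : {x : EuclideanSpace ℝ (Fin 0) | f x = 0} = ∅ := by
      ext x
      simp only [Set.mem_setOf_eq, Set.mem_empty_iff_false, iff_false]
      intro hx
      exact hf0 (funext fun y => (Subsingleton.elim y x) ▸ hx)
    constructor
    · refine ⟨fun _ => ∅, fun _ => isCompact_empty, fun _ => by simp, by simp [hZ]⟩
    · rw [hZ, dimH_empty]
      exact zero_le
  · obtain ⟨K, hK1, hK2, hK3⟩ := zs_main hd hf hf0
    refine ⟨⟨K, hK1, hK2, hK3⟩, ?_⟩
    rw [hK3, dimH_iUnion]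
    refine iSup_le fun n => ?_
    have hd1 : 1 ≤ d := hd
    have hexp : ((((d - 1 : ℕ) : NNReal)) : ℝ) = (d : ℝ) - 1 := by
      have h1 : (1 : NNReal) ≤ (d : NNReal) := by exact_mod_cast hd1
      push_cast [NNReal.coe_sub h1]
      ring
    have : dimH (K n) ≤ (((d - 1 : ℕ) : NNReal) : ℝ≥0∞) := by
      refine dimH_le_of_hausdorffMeasure_ne_top ?_
      rw [show (((d - 1 : ℕ) : NNReal) : ℝ) = (d : ℝ) - 1 from hexp]
      exact (hK2 n).ne
    refine le_trans this ?_
    rw [show (((d - 1 : ℕ) : NNReal) : ℝ≥0∞) = ((d - 1 : ℕ) : ℝ≥0∞) by simp]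
    rw [ENNReal.natCast_sub]
    simp
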